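/- Comma-propagated universal arrows, descending case: let J be a small category, let G : (J ⥤ D) ⥤ C be a functor, and let (d, g) be a universal arrow from an object c of C to G, where d is an object of J ⥤ D and g : c ⟶ G d. Then the pair consisting of the object L.obj(𝟙_d) of J ⥤ Arrow D and the morphism (g, g) : 𝟙_c ⟶ (K ⋙ Ĝ).obj(L.obj(𝟙_d)) is a universal arrow from the object 𝟙_c of Arrow C to the comma-propagated functor K ⋙ Ĝ : (J ⥤ Arrow D) ⥤ Arrow C, where K : (J ⥤ Arrow D) ⥤ Arrow(J ⥤ D) is the modulator inverse to L (so that (K ⋙ Ĝ).obj(L.obj(𝟙_d)) = Ĝ.obj(𝟙_d) = 𝟙_{G d}). -/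

import Mathlib

open CategoryTheory

/-- The modulator functor `L : Arrow (J ⥤ D) ⥤ (J ⥤ Arrow D)`. -/
def modulatorL (J : Type u₁) [SmallCategory J] (D : Type u₂) [Category.{v₂} D] :
    Arrow (J ⥤ D) ⥤ (J ⥤ Arrow D) where
  obj h :=
    { obj := fun j => Arrow.mk (h.hom.app j)
      map := fun {j j'} u =>
        Arrow.homMk' (u := h.left.map u) (v := h.right.map u) (h.hom.naturality u)
      map_id := by intro j; ext <;> simp
      map_comp := by intro _ _ _ u v; ext <;> simp }
  map {h k} g :=
    { app := fun j =>
        Arrow.homMk' (u := g.left.app j) (v := g.right.app j)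
          (by exact NatTrans.congr_app (Arrow.w g) j)
      naturality := by intro j j' u; ext; exacts [g.left.naturality u, g.right.naturality u] }
  map_id := by intro h; ext j <;> simp
  map_comp := by intro _ _ _ f g; ext j <;> rfl

/-- The modulator functor `K : (J ⥤ Arrow D) ⥤ Arrow (J ⥤ D)`, inverse to `L`. -/
def modulatorK (J : Type u₁) [SmallCategory J] (D : Type u₂) [Category.{v₂} D] :
    (J ⥤ Arrow D) ⥤ Arrow (J ⥤ D) where
  obj F := Arrow.mk (X := F ⋙ Arrow.leftFunc) (Y := F ⋙ Arrow.rightFunc)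
    { app := fun j => (F.obj j).hom
      naturality := fun j j' u => Arrow.w (F.map u) }
  map {F F'} α := Arrow.homMk'
    (u := Functor.whiskerRight α Arrow.leftFunc) (v := Functor.whiskerRight α Arrow.rightFunc)
    (by ext j; exact Arrow.w (α.app j))
  map_id := by intro F; ext j <;> simp
  map_comp := by intro _ _ _ f g; ext j <;> simp

/-- Comma-propagated universal arrows (descending case): if `(d, g)` is a
universal arrow from `c : C` to `G : (J ⥤ D) ⥤ C`, then `(L.obj (𝟙 d), (g, g))` is a
universal arrow from the object `𝟙 c` of `Arrow C` to the comma-propagated functor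
`K ⋙ Ĝ : (J ⥤ Arrow D) ⥤ Arrow C`. -/
theorem descending_universal_arrow
    (J : Type u₁) [SmallCategory J] {D : Type u₂} [Category.{v₂} D]
    {C : Type u₃} [Category.{v₃} C]
    (G : (J ⥤ D) ⥤ C) (c : C) (d : J ⥤ D) (g : c ⟶ G.obj d)
    (h : Limits.IsInitial (StructuredArrow.mk g)) :
    Nonempty (Limits.IsInitial (StructuredArrow.mk
      (T := modulatorK J D ⋙ G.mapArrow) (Y := (modulatorL J D).obj (Arrow.mk (𝟙 d)))
      (Arrow.homMk (f := Arrow.mk (𝟙 c))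
        (g := (modulatorK J D ⋙ G.mapArrow).obj ((modulatorL J D).obj (Arrow.mk (𝟙 d))))
        (u := g) (v := g)
        (by
          show g ≫ G.map (𝟙 d) = (Arrow.mk (𝟙 c)).hom ≫ g
          simp)))) := by
  have key : ∀ (e : J ⥤ D) (w : c ⟶ G.obj e) (p₁ p₂ : d ⟶ e),
      g ≫ G.map p₁ = w → g ≫ G.map p₂ = w → p₁ = p₂ := by
    intro e w p₁ p₂ h₁ h₂
    have := h.hom_ext
      (StructuredArrow.homMk p₁ (by simpa using h₁) :
        StructuredArrow.mk g ⟶ StructuredArrow.mk w)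
      (StructuredArrow.homMk p₂ (by simpa using h₂))
    exact congrArg CommaMorphism.right this
  constructor
  refine Limits.IsInitial.ofUniqueHom ?_ ?_
  · intro X
    let F := X.right
    let u : c ⟶ G.obj (F ⋙ Arrow.leftFunc) := X.hom.left
    let t := h.to (StructuredArrow.mk u)
    let p : d ⟶ F ⋙ Arrow.leftFunc := t.right
    have hp : g ≫ G.map p = u := by simpa using (StructuredArrow.w t)
    let q : d ⟶ F ⋙ Arrow.rightFunc := p ≫ ((modulatorK J D).obj F).hom
    have hq : g ≫ G.map q = X.hom.right := by
      have hw : X.hom.left ≫ G.map ((modulatorK J D).obj F).hom = X.hom.right := by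
        exact (Arrow.w X.hom).trans (Category.id_comp _)
      rw [show G.map q = G.map p ≫ G.map ((modulatorK J D).obj F).hom from G.map_comp _ _]
      exact (Category.assoc _ _ _).symm.trans ((congrArg (· ≫ _) hp).trans hw)
    let α : (modulatorL J D).obj (Arrow.mk (𝟙 d)) ⟶ F :=
        { app := fun j =>
            Arrow.homMk' (u := p.app j) (v := q.app j)
              (by simp [q, modulatorK, modulatorL]; exact (Category.id_comp _).symm)
          naturality := by
            intro j j' v
            ext
            · exact p.naturality v
            · exact q.naturality v }
    have hw : (StructuredArrow.mk
        (T := modulatorK J D ⋙ G.mapArrow) (Y := (modulatorL J D).obj (Arrow.mk (𝟙 d)))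
        (Arrow.homMk (f := Arrow.mk (𝟙 c))
          (g := (modulatorK J D ⋙ G.mapArrow).obj ((modulatorL J D).obj (Arrow.mk (𝟙 d))))
          (u := g) (v := g)
          (by show g ≫ G.map (𝟙 d) = (Arrow.mk (𝟙 c)).hom ≫ g; simp))).hom
        ≫ (modulatorK J D ⋙ G.mapArrow).map α = X.hom := by
      apply Arrow.hom_ext
      · exact hp
      · exact hq
    exact { left := 𝟙 _, right := α, w := by simpa using hw.symm }
  · intro X m
    apply StructuredArrow.hom_ext
    have hwl : g ≫ G.map (Functor.whiskerRight m.right Arrow.leftFunc) = X.hom.left := by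
      have := congrArg Arrow.leftFunc.map (StructuredArrow.w m)
      exact this
    have hwr : g ≫ G.map (Functor.whiskerRight m.right Arrow.rightFunc) = X.hom.right := by
      have := congrArg Arrow.rightFunc.map (StructuredArrow.w m)
      exact this
    -- compare with the constructed morphism
    set t := h.to (StructuredArrow.mk (X.hom.left : c ⟶ G.obj (X.right ⋙ Arrow.leftFunc)))
    have hp : g ≫ G.map t.right = X.hom.left := by exact StructuredArrow.w t
    have hl : Functor.whiskerRight m.right Arrow.leftFunc = t.right := key _ _ _ _ hwl hp
    have hr : Functor.whiskerRight m.right Arrow.rightFunc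
        = t.right ≫ ((modulatorK J D).obj X.right).hom := by
      refine key _ X.hom.right _ _ hwr ?_
      have hw : X.hom.left ≫ G.map ((modulatorK J D).obj X.right).hom = X.hom.right := by
        exact (Arrow.w X.hom).trans (Category.id_comp _)
      simp only [Functor.map_comp, ← Category.assoc, hp]
      exact hw
    ext j
    · exact NatTrans.congr_app hl j
    · exact NatTrans.congr_app hr j
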